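/- Let X be a d×d positive definite Hermitian matrix and M a d×d Hermitian matrix. Then: (i) if Tr(X) ≤ 1, then Tr(M X^{-1} M X^{-1}) ≥ Tr(M²) (the squared Frobenius norm of M); and (ii) if M ≠ 0, then Tr(M X^{-1} M X^{-1}) > 0 (for any PD X, with no trace restriction). -/

import Mathlib

open Matrix
open scoped ComplexOrder

/-- Let `X` be PD Hermitian and `M` Hermitian. Then:
(i) if `Tr(X) ≤ 1`, then `Tr(M X⁻¹ M X⁻¹) ≥ Tr(M²)`; and
(ii) if `M ≠ 0`, then `Tr(M X⁻¹ M X⁻¹) > 0`. -/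
theorem stmt11 (d : ℕ) (X M : Matrix (Fin d) (Fin d) ℂ)
    (hX : X.PosDef) (hM : M.IsHermitian) :
    (X.trace.re ≤ 1 → (M * M).trace.re ≤ (M * X⁻¹ * M * X⁻¹).trace.re) ∧
    (M ≠ 0 → 0 < (M * X⁻¹ * M * X⁻¹).trace.re) := by
  classical
  have hA := hX.1
  set V : Matrix (Fin d) (Fin d) ℂ := (hA.eigenvectorUnitary : Matrix (Fin d) (Fin d) ℂ) with hVdef
  set lam : Fin d → ℝ := hA.eigenvalues with hlamdef
  have hV1 : V * star V = 1 := Matrix.mem_unitaryGroup_iff.mp hA.eigenvectorUnitary.2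
  have hV2 : star V * V = 1 := Matrix.mem_unitaryGroup_iff'.mp hA.eigenvectorUnitary.2
  set A : Matrix (Fin d) (Fin d) ℂ := star V * M * V with hAdef
  have hlampos : ∀ i, 0 < lam i := hX.eigenvalues_pos
  have hlamne : ∀ i, (lam i : ℂ) ≠ 0 := fun i => by
    exact_mod_cast Complex.ofReal_ne_zero.mpr (ne_of_gt (hlampos i))
  set D : Matrix (Fin d) (Fin d) ℂ := diagonal (fun i => (lam i : ℂ)) with hDdef
  set E : Matrix (Fin d) (Fin d) ℂ := diagonal (fun i => ((lam i : ℝ)⁻¹ : ℂ)) with hEdef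
  have hXspec : X = V * D * star V := hA.spectral_theorem
  -- inverse of X
  have hXinv : X⁻¹ = V * E * star V := by
    apply Matrix.inv_eq_right_inv
    rw [hXspec]
    calc V * D * star V * (V * E * star V)
        = V * D * (star V * V) * E * star V := by noncomm_ring
      _ = V * (D * E) * star V := by rw [hV2]; noncomm_ring
      _ = 1 := by
          rw [hDdef, hEdef, diagonal_mul_diagonal]
          have : (fun i => (lam i : ℂ) * ((lam i : ℝ)⁻¹ : ℂ)) = fun _ => (1 : ℂ) := by
            funext i
            push_cast
            exact mul_inv_cancel₀ (hlamne i)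
          rw [this, diagonal_one, mul_one, hV1]
  have hMdec : M = V * A * star V := by
    rw [hAdef]
    calc M = (V * star V) * M * (V * star V) := by rw [hV1]; noncomm_ring
      _ = V * (star V * M * V) * star V := by noncomm_ring
  -- A is Hermitian entrywise
  have hAherm : ∀ i j, A j i = star (A i j) := by
    intro i j
    have h : A.IsHermitian := by
      rw [hAdef, Matrix.star_eq_conjTranspose]
      exact Matrix.isHermitian_conjTranspose_mul_mul V hM
    exact (h.apply j i).symm
  -- trace conjugation invariance
  have htr : ∀ B : Matrix (Fin d) (Fin d) ℂ, (V * B * star V).trace = B.trace := by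
    intro B
    rw [Matrix.trace_mul_cycle, hV2, Matrix.one_mul]
  -- the key product
  have hprod : M * X⁻¹ * M * X⁻¹ = V * (A * E * A * E) * star V := by
    rw [hMdec, hXinv]
    calc V * A * star V * (V * E * star V) * (V * A * star V) * (V * E * star V)
        = V * A * (star V * V) * E * (star V * V) * A * (star V * V) * E * star V := by
          noncomm_ring
      _ = V * (A * E * A * E) * star V := by rw [hV2]; noncomm_ring
  -- trace formulas
  have htr1 : (M * M).trace.re = ∑ i, ∑ j, Complex.normSq (A i j) := by
    rw [hMdec]
    have : V * A * star V * (V * A * star V) = V * (A * A) * star V := by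
      calc V * A * star V * (V * A * star V) = V * A * (star V * V) * A * star V := by
            noncomm_ring
        _ = V * (A * A) * star V := by rw [hV2]; noncomm_ring
    rw [this, htr, Matrix.trace, Complex.re_sum]
    refine Finset.sum_congr rfl fun i _ => ?_
    rw [Matrix.diag_apply, Matrix.mul_apply, Complex.re_sum]
    refine Finset.sum_congr rfl fun j _ => ?_
    rw [hAherm i j, Complex.star_def, Complex.mul_conj, Complex.ofReal_re]
  have htr2 : (M * X⁻¹ * M * X⁻¹).trace.re
      = ∑ i, ∑ j, Complex.normSq (A i j) * ((lam i)⁻¹ * (lam j)⁻¹) := by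
    rw [hprod, htr]
    have hAE : A * E * A * E = (A * E) * (A * E) := by noncomm_ring
    rw [hAE, Matrix.trace, Complex.re_sum]
    refine Finset.sum_congr rfl fun i _ => ?_
    rw [Matrix.diag_apply, Matrix.mul_apply, Complex.re_sum]
    refine Finset.sum_congr rfl fun j _ => ?_
    rw [hEdef, Matrix.mul_diagonal, Matrix.mul_diagonal, hAherm i j]
    have : A i j * ((lam j : ℝ)⁻¹ : ℂ) * (star (A i j) * ((lam i : ℝ)⁻¹ : ℂ))
        = ((Complex.normSq (A i j) * ((lam i)⁻¹ * (lam j)⁻¹) : ℝ) : ℂ) := by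
      rw [mul_mul_mul_comm, Complex.star_def, Complex.mul_conj]
      push_cast
      ring
    rw [this, Complex.ofReal_re]
  constructor
  · intro htrX
    -- each eigenvalue is at most 1
    have hsum : X.trace.re = ∑ i, lam i := by
      rw [hXspec, htr, hDdef, Matrix.trace_diagonal, Complex.re_sum]
      simp
    have hlamle : ∀ i, lam i ≤ 1 := by
      intro i
      calc lam i ≤ ∑ j, lam j :=
            Finset.single_le_sum (fun j _ => (hlampos j).le) (Finset.mem_univ i)
        _ = X.trace.re := hsum.symm
        _ ≤ 1 := htrX
    rw [htr1, htr2]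
    refine Finset.sum_le_sum fun i _ => Finset.sum_le_sum fun j _ => ?_
    have hinv : 1 ≤ (lam i)⁻¹ * (lam j)⁻¹ := by
      have h1 : 1 ≤ (lam i)⁻¹ := (one_le_inv₀ (hlampos i)).mpr (hlamle i)
      have h2 : 1 ≤ (lam j)⁻¹ := (one_le_inv₀ (hlampos j)).mpr (hlamle j)
      nlinarith
    exact le_mul_of_one_le_right (Complex.normSq_nonneg _) hinv
  · intro hMne
    have hAne : A ≠ 0 := by
      intro h
      apply hMne
      rw [hMdec, h, Matrix.mul_zero, Matrix.zero_mul]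
    obtain ⟨i, j, hij⟩ : ∃ i j, A i j ≠ 0 := by
      by_contra h
      push_neg at h
      exact hAne (by ext i j; exact h i j)
    rw [htr2]
    have hterm : ∀ a b : Fin d, 0 ≤ Complex.normSq (A a b) * ((lam a)⁻¹ * (lam b)⁻¹) := by
      intro a b
      have ha := inv_pos.mpr (hlampos a)
      have hb := inv_pos.mpr (hlampos b)
      exact mul_nonneg (Complex.normSq_nonneg _) (by positivity)
    refine Finset.sum_pos' (fun a _ => Finset.sum_nonneg fun b _ => hterm a b)
      ⟨i, Finset.mem_univ i, ?_⟩
    refine Finset.sum_pos' (fun b _ => hterm i b) ⟨j, Finset.mem_univ j, ?_⟩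
    have h1 : 0 < Complex.normSq (A i j) := Complex.normSq_pos.mpr hij
    have h2 : 0 < (lam i)⁻¹ := inv_pos.mpr (hlampos i)
    have h3 : 0 < (lam j)⁻¹ := inv_pos.mpr (hlampos j)
    positivity
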